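/- Let N be a nonnegative integer-valued random variable with mean μ ∈ (0,∞), finite variance, and let ζ ~ N(0,1) be independent of N. Then for every σ > 0, the Wasserstein distance between the law of σ√(N/μ)·ζ and the normal distribution N(0,σ²) is at most σ·√(2/π)·√(Var(N))/μ. -/

import Mathlib

open MeasureTheory ProbabilityTheory Real Set Filter
open scoped NNReal ENNReal

lemma my_integral_mul_exp_neg_mul_sq {b : ℝ} (hb : 0 < b) :
    ∫ r in Ioi (0:ℝ), r * rexp (-b * r ^ 2) = (2 * b)⁻¹ := by
  have hb' : b ≠ 0 := hb.ne'
  have A : ∀ x : ℝ, HasDerivAt (fun x => -(2 * b)⁻¹ * rexp (-b * x ^ 2))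
      (x * rexp (-b * x ^ 2)) x := by
    intro x
    convert ((hasDerivAt_pow 2 x).const_mul (-b)).exp.const_mul (-(2 * b)⁻¹) using 1
    · rfl
    · rfl
    field_simp
    ring
  have B : Tendsto (fun y : ℝ ↦ -(2 * b)⁻¹ * rexp (-b * y ^ 2))
      atTop (nhds (-(2 * b)⁻¹ * 0)) := by
    refine Tendsto.const_mul _ ?_
    refine Real.tendsto_exp_atBot.comp ?_
    exact (tendsto_pow_atTop two_ne_zero).const_mul_atTop_of_neg (neg_lt_zero.2 hb)
  convert integral_Ioi_of_hasDerivAt_of_tendsto' (fun x _ => A x)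
    (integrable_mul_exp_neg_mul_sq hb).integrableOn B using 1
  simp

lemma gaussianReal_one_eq : gaussianReal 0 1
    = MeasureTheory.volume.withDensity
        (fun x => ((Real.toNNReal (gaussianPDFReal 0 1 x) : ℝ≥0) : ℝ≥0∞)) := by
  rw [gaussianReal_of_var_ne_zero _ one_ne_zero, gaussianPDF_def]
  rfl

lemma pdf_one_eq (x : ℝ) :
    gaussianPDFReal 0 1 x = (Real.sqrt (2 * Real.pi))⁻¹ * rexp (-x ^ 2 / 2) := by
  simp [gaussianPDFReal]

lemma integrable_vol_abs_pdf :
    Integrable (fun x => gaussianPDFReal 0 1 x * |x|) MeasureTheory.volume := by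
  have I := ((integrable_mul_exp_neg_mul_sq (b := (1:ℝ)/2) (by norm_num)).abs).const_mul
    ((Real.sqrt (2 * Real.pi))⁻¹)
  convert I using 2 with x
  rw [pdf_one_eq, abs_mul, abs_of_pos (exp_pos _)]
  ring_nf

lemma integrable_abs_gaussian : Integrable (fun x : ℝ => |x|) (gaussianReal 0 1) := by
  rw [gaussianReal_one_eq,
    integrable_withDensity_iff_integrable_smul
      ((measurable_gaussianPDFReal 0 1).real_toNNReal)]
  refine integrable_vol_abs_pdf.congr (Filter.Eventually.of_forall fun x => ?_)
  simp [NNReal.smul_def, Real.coe_toNNReal _ (gaussianPDFReal_nonneg 0 1 x)]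

lemma integrable_id_gaussian : Integrable (fun x : ℝ => x) (gaussianReal 0 1) := by
  have := (integrable_norm_iff (f := fun x : ℝ => x)
    measurable_id.aestronglyMeasurable (μ := gaussianReal 0 1)).mp
  simp only [Real.norm_eq_abs] at this
  exact this integrable_abs_gaussian

lemma integral_abs_gaussian : ∫ x, |x| ∂(gaussianReal 0 1) = Real.sqrt (2 / Real.pi) := by
  rw [gaussianReal_one_eq,
    integral_withDensity_eq_integral_smul ((measurable_gaussianPDFReal 0 1).real_toNNReal)]
  have heq : ∀ x : ℝ, (Real.toNNReal (gaussianPDFReal 0 1 x)) • |x|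
      = (Real.sqrt (2 * Real.pi))⁻¹ * (rexp (-(1/2) * |x| ^ 2) * |x|) := by
    intro x
    rw [NNReal.smul_def, smul_eq_mul, Real.coe_toNNReal _ (gaussianPDFReal_nonneg 0 1 x),
      pdf_one_eq, sq_abs]
    ring_nf
  simp_rw [heq]
  rw [MeasureTheory.integral_const_mul]
  have hcomp : ∫ x : ℝ, rexp (-(1/2) * |x| ^ 2) * |x|
      = 2 * ∫ x in Ioi (0:ℝ), rexp (-(1/2) * x ^ 2) * x := integral_comp_abs (f := fun t => rexp (-(1/2) * t ^ 2) * t)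
  rw [hcomp]
  have h3 : ∫ x in Ioi (0:ℝ), rexp (-(1/2) * x ^ 2) * x
      = ∫ x in Ioi (0:ℝ), x * rexp (-(1/2) * x ^ 2) := by
    congr 1; ext x; ring
  rw [h3, my_integral_mul_exp_neg_mul_sq (by norm_num)]
  have hπ : 0 < Real.pi := Real.pi_pos
  have h2 : 0 < Real.sqrt (2 * Real.pi) := Real.sqrt_pos.mpr (by positivity)
  have h1 : Real.sqrt (2/Real.pi) * Real.sqrt (2*Real.pi) = 2 := by
    rw [← Real.sqrt_mul (by positivity)]
    rw [show (2/Real.pi)*(2*Real.pi) = 2^2 by field_simp]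
    exact Real.sqrt_sq (by norm_num)
  field_simp
  nlinarith [h1, Real.mul_self_sqrt (show (0:ℝ) ≤ 2 by norm_num), Real.sqrt_nonneg Real.pi, Real.sqrt_nonneg 2]

lemma int_abs_le_sqrt {Ω : Type*} [MeasureSpace Ω] [IsProbabilityMeasure (ℙ : Measure Ω)]
    {X : Ω → ℝ} (h1 : Integrable X ℙ) (h2 : Integrable (fun ω => X ω ^ 2) ℙ) :
    ∫ ω, |X ω| ∂ℙ ≤ Real.sqrt (∫ ω, X ω ^ 2 ∂ℙ) := by
  set a := ∫ ω, X ω ^ 2 ∂ℙ with ha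
  have ha0 : 0 ≤ a := integral_nonneg fun ω => sq_nonneg _
  rcases ha0.eq_or_lt with hz | hpos
  · have hae : (fun ω => X ω ^ 2) =ᵐ[ℙ] 0 :=
      (integral_eq_zero_iff_of_nonneg (fun ω => sq_nonneg _) h2).mp hz.symm
    have habs : (fun ω => |X ω|) =ᵐ[ℙ] 0 := by
      filter_upwards [hae] with ω hω
      have : X ω ^ 2 = 0 := hω
      have : X ω = 0 := by nlinarith
      simp [this]
    rw [integral_congr_ae habs]
    simpa using Real.sqrt_nonneg a
  · have hsq : Real.sqrt a ^ 2 = a := Real.sq_sqrt ha0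
    have hs : 0 < Real.sqrt a := Real.sqrt_pos.mpr hpos
    have key : ∫ ω, |X ω| ∂ℙ ≤ ∫ ω, (X ω ^ 2 + a) / (2 * Real.sqrt a) ∂ℙ := by
      refine integral_mono h1.abs ((h2.add (integrable_const a)).div_const _)
        (fun ω => ?_)
      rw [le_div_iff₀ (by positivity)]
      nlinarith [sq_nonneg (|X ω| - Real.sqrt a), sq_abs (X ω), abs_nonneg (X ω)]
    calc ∫ ω, |X ω| ∂ℙ ≤ ∫ ω, (X ω ^ 2 + a) / (2 * Real.sqrt a) ∂ℙ := key
      _ = (a + a) / (2 * Real.sqrt a) := by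
          rw [integral_div, integral_add h2 (integrable_const a), integral_const]
          simp [← ha]
      _ = Real.sqrt a := by
          rw [show a + a = 2 * a by ring, mul_div_mul_left _ _ (two_ne_zero), Real.div_sqrt]

/-- Let `N` be a nonnegative-integer-valued random variable with mean `μ ∈ (0,∞)` and
finite variance, and `ζ ~ N(0,1)` independent of `N`. For every `σ > 0`, the Wasserstein
distance between the law of `σ√(N/μ) ζ` and `N(0,σ²)` is at most `σ √(2/π) √(Var N)/μ`. -/
theorem stmt_11 {Ω : Type*} [MeasureSpace Ω] [IsProbabilityMeasure (ℙ : Measure Ω)]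
    (N : Ω → ℕ) (ζ : Ω → ℝ) (hNmeas : Measurable N) (hζmeas : Measurable ζ)
    (hN2 : MemLp (fun ω => (N ω : ℝ)) 2 ℙ)
    (hζ : Measure.map ζ ℙ = gaussianReal 0 1)
    (hindep : IndepFun N ζ ℙ)
    (μ : ℝ) (hμ : μ = ∫ ω, (N ω : ℝ) ∂ℙ) (hμpos : 0 < μ)
    (σ : ℝ) (hσ : 0 < σ) :
    ∀ h : ℝ → ℝ, LipschitzWith 1 h →
      |(∫ ω, h (σ * Real.sqrt ((N ω : ℝ) / μ) * ζ ω) ∂ℙ) -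
          ∫ x, h x ∂(gaussianReal 0 ⟨σ ^ 2, sq_nonneg σ⟩)| ≤
        σ * Real.sqrt (2 / Real.pi) * Real.sqrt (Var[fun ω => (N ω : ℝ)]) / μ := by
  intro h hLip
  set f : Ω → ℝ := fun ω => Real.sqrt ((N ω : ℝ) / μ) with hfdef
  have hfmeas : Measurable f :=
    (measurable_from_nat (f := fun n : ℕ => Real.sqrt ((n : ℝ) / μ))).comp hNmeas
  have hNint : Integrable (fun ω => (N ω : ℝ)) ℙ := hN2.integrable one_le_two
  have hζint : Integrable ζ ℙ := by
    have h0 := integrable_map_measure (μ := (ℙ : Measure Ω)) (f := ζ) (g := fun x : ℝ => x)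
      measurable_id.aestronglyMeasurable hζmeas.aemeasurable
    rw [hζ] at h0
    exact h0.mp integrable_id_gaussian
  have hζabsint : Integrable (fun ω => |ζ ω|) ℙ := hζint.abs
  have hζabs : ∫ ω, |ζ ω| ∂ℙ = Real.sqrt (2 / Real.pi) := by
    have h0 := integral_map (μ := (ℙ : Measure Ω)) (φ := ζ) hζmeas.aemeasurable
      (f := fun x : ℝ => |x|) continuous_abs.aestronglyMeasurable
    rw [hζ] at h0
    rw [← h0, integral_abs_gaussian]
  have hfint : Integrable f ℙ := by
    refine Integrable.mono' ((integrable_const 1).add (hNint.div_const μ))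
      hfmeas.aestronglyMeasurable (Filter.Eventually.of_forall fun ω => ?_)
    have ht : (0:ℝ) ≤ (N ω : ℝ) / μ := by positivity
    rw [Real.norm_eq_abs, abs_of_nonneg (Real.sqrt_nonneg _)]
    simp only [Pi.add_apply]
    nlinarith [Real.sq_sqrt ht, Real.sqrt_nonneg ((N ω : ℝ) / μ),
      sq_nonneg (Real.sqrt ((N ω : ℝ) / μ) - 1)]
  have hindf : IndepFun f ζ ℙ :=
    hindep.comp (measurable_from_nat (f := fun n : ℕ => Real.sqrt ((n : ℝ) / μ))) measurable_id
  have hXint : Integrable (fun ω => σ * Real.sqrt ((N ω : ℝ) / μ) * ζ ω) ℙ := by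
    have := (hindf.integrable_mul hfint hζint).const_mul σ
    simpa only [Pi.mul_apply, ← mul_assoc] using this
  have hYint : Integrable (fun ω => σ * ζ ω) ℙ := hζint.const_mul σ
  have hLipAbs : ∀ x y : ℝ, |h x - h y| ≤ |x - y| := fun x y => by
    have := hLip.dist_le_mul x y
    simpa [Real.dist_eq] using this
  have hmono : ∀ g : Ω → ℝ, Integrable g ℙ → Measurable g →
      Integrable (fun ω => h (g ω)) ℙ := by
    intro g hg hgm
    refine Integrable.mono' ((integrable_const |h 0|).add hg.abs)
      (hLip.continuous.measurable.comp hgm).aestronglyMeasurable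
      (Filter.Eventually.of_forall fun ω => ?_)
    rw [Real.norm_eq_abs]
    have h1 := hLipAbs (g ω) 0
    have h2 : |h (g ω)| - |h 0| ≤ |h (g ω) - h 0| := abs_sub_abs_le_abs_sub _ _
    simp only [sub_zero] at h1
    simp only [Pi.add_apply]
    linarith
  have hXmeas : Measurable (fun ω => σ * Real.sqrt ((N ω : ℝ) / μ) * ζ ω) :=
    (hfmeas.const_mul σ).mul hζmeas
  have hYmeas : Measurable (fun ω => σ * ζ ω) := hζmeas.const_mul σ
  have hhX := hmono _ hXint hXmeas
  have hhY := hmono _ hYint hYmeas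
  -- gaussian side
  have hmap : Measure.map (fun ω => σ * ζ ω) ℙ = gaussianReal 0 ⟨σ ^ 2, sq_nonneg σ⟩ := by
    have hcomp : (fun ω => σ * ζ ω) = (fun x : ℝ => σ * x) ∘ ζ := rfl
    rw [hcomp, ← Measure.map_map (measurable_const_mul σ) hζmeas, hζ,
      gaussianReal_map_const_mul]
    norm_num
    rfl
  have hgauss : ∫ x, h x ∂(gaussianReal 0 ⟨σ ^ 2, sq_nonneg σ⟩) = ∫ ω, h (σ * ζ ω) ∂ℙ := by
    rw [← hmap, integral_map (hζmeas.const_mul σ).aemeasurable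
      hLip.continuous.aestronglyMeasurable]
  rw [hgauss, ← integral_sub hhX hhY]
  -- independence of |f - 1| and |ζ|
  have hindf2 : IndepFun (fun ω => |f ω - 1|) (fun ω => |ζ ω|) ℙ :=
    hindep.comp (measurable_from_nat (f := fun n : ℕ => |Real.sqrt ((n : ℝ) / μ) - 1|))
      continuous_abs.measurable
  have habsfint : Integrable (fun ω => |f ω - 1|) ℙ := (hfint.sub (integrable_const 1)).abs
  have hmulint : Integrable (fun ω => |f ω - 1| * |ζ ω|) ℙ :=
    hindf2.integrable_mul habsfint hζabsint
  have step1 : |∫ ω, (h (σ * Real.sqrt ((N ω : ℝ) / μ) * ζ ω) - h (σ * ζ ω)) ∂ℙ|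
      ≤ σ * ∫ ω, |f ω - 1| * |ζ ω| ∂ℙ := by
    calc |∫ ω, (h (σ * Real.sqrt ((N ω : ℝ) / μ) * ζ ω) - h (σ * ζ ω)) ∂ℙ|
        ≤ ∫ ω, |h (σ * Real.sqrt ((N ω : ℝ) / μ) * ζ ω) - h (σ * ζ ω)| ∂ℙ := by
          simpa [Real.norm_eq_abs] using
            norm_integral_le_integral_norm
              (fun ω => h (σ * Real.sqrt ((N ω : ℝ) / μ) * ζ ω) - h (σ * ζ ω))
      _ ≤ ∫ ω, σ * (|f ω - 1| * |ζ ω|) ∂ℙ := by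
          refine integral_mono (hhX.sub hhY).abs (hmulint.const_mul σ) (fun ω => ?_)
          calc |h (σ * Real.sqrt ((N ω : ℝ) / μ) * ζ ω) - h (σ * ζ ω)|
              ≤ |σ * Real.sqrt ((N ω : ℝ) / μ) * ζ ω - σ * ζ ω| := hLipAbs _ _
            _ = σ * (|f ω - 1| * |ζ ω|) := by
                rw [show σ * Real.sqrt ((N ω : ℝ) / μ) * ζ ω - σ * ζ ω
                    = σ * ((f ω - 1) * ζ ω) by simp [hfdef]; ring]
                rw [abs_mul, abs_mul, abs_of_pos hσ]
      _ = σ * ∫ ω, |f ω - 1| * |ζ ω| ∂ℙ := integral_const_mul σ _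
  have step2 : ∫ ω, |f ω - 1| * |ζ ω| ∂ℙ
      = (∫ ω, |f ω - 1| ∂ℙ) * Real.sqrt (2 / Real.pi) := by
    have h0 := hindf2.integral_mul_eq_mul_integral habsfint.aestronglyMeasurable hζabsint.aestronglyMeasurable
    rw [show (fun ω => |f ω - 1| * |ζ ω|)
        = (fun ω => |f ω - 1|) * (fun ω => |ζ ω|) from rfl, h0, hζabs]
  -- bound ∫ |f - 1|
  have hNdivint : Integrable (fun ω => (N ω : ℝ) / μ - 1) ℙ :=
    (hNint.div_const μ).sub (integrable_const 1)
  have p1 : ∫ ω, |f ω - 1| ∂ℙ ≤ ∫ ω, |(N ω : ℝ) / μ - 1| ∂ℙ := by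
    refine integral_mono habsfint hNdivint.abs (fun ω => ?_)
    have ht : (0:ℝ) ≤ (N ω : ℝ) / μ := by positivity
    have hs0 : 0 ≤ f ω := Real.sqrt_nonneg _
    have hsq : f ω ^ 2 = (N ω : ℝ) / μ := Real.sq_sqrt ht
    calc |f ω - 1| ≤ |f ω - 1| * (f ω + 1) :=
          le_mul_of_one_le_right (abs_nonneg _) (by linarith)
      _ = |(f ω - 1) * (f ω + 1)| := by
          rw [abs_mul, abs_of_nonneg (by linarith : (0:ℝ) ≤ f ω + 1)]
      _ = |(N ω : ℝ) / μ - 1| := by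
          rw [show (f ω - 1) * (f ω + 1) = f ω ^ 2 - 1 by ring, hsq]
  have p2 : ∫ ω, |(N ω : ℝ) / μ - 1| ∂ℙ = (∫ ω, |(N ω : ℝ) - μ| ∂ℙ) / μ := by
    rw [← integral_div]
    refine integral_congr_ae (Filter.Eventually.of_forall fun ω => ?_)
    show |(N ω : ℝ) / μ - 1| = |(N ω : ℝ) - μ| / μ
    rw [show (N ω : ℝ) / μ - 1 = ((N ω : ℝ) - μ) / μ by field_simp, abs_div,
      abs_of_pos hμpos]
  have hXc2 : Integrable (fun ω => ((N ω : ℝ) - μ) ^ 2) ℙ :=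
    (hN2.sub (memLp_const μ)).integrable_sq
  have p3 : ∫ ω, |(N ω : ℝ) - μ| ∂ℙ ≤ Real.sqrt (Var[fun ω => (N ω : ℝ)]) := by
    have hvar : Var[fun ω => (N ω : ℝ)] = ∫ ω, ((N ω : ℝ) - μ) ^ 2 ∂ℙ := by
      rw [variance_eq_integral hN2.aestronglyMeasurable.aemeasurable]
      rw [hμ]
    rw [hvar]
    exact int_abs_le_sqrt (hNint.sub (integrable_const μ)) hXc2
  have habsf_nonneg : 0 ≤ ∫ ω, |f ω - 1| ∂ℙ := integral_nonneg fun ω => abs_nonneg _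
  have hfinal : ∫ ω, |f ω - 1| ∂ℙ ≤ Real.sqrt (Var[fun ω => (N ω : ℝ)]) / μ := by
    calc ∫ ω, |f ω - 1| ∂ℙ ≤ ∫ ω, |(N ω : ℝ) / μ - 1| ∂ℙ := p1
      _ = (∫ ω, |(N ω : ℝ) - μ| ∂ℙ) / μ := p2
      _ ≤ Real.sqrt (Var[fun ω => (N ω : ℝ)]) / μ := by gcongr
  calc |∫ ω, (h (σ * Real.sqrt ((N ω : ℝ) / μ) * ζ ω) - h (σ * ζ ω)) ∂ℙ|
      ≤ σ * ∫ ω, |f ω - 1| * |ζ ω| ∂ℙ := step1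
    _ = σ * ((∫ ω, |f ω - 1| ∂ℙ) * Real.sqrt (2 / Real.pi)) := by rw [step2]
    _ ≤ σ * ((Real.sqrt (Var[fun ω => (N ω : ℝ)]) / μ) * Real.sqrt (2 / Real.pi)) := by
        exact mul_le_mul_of_nonneg_left
          (mul_le_mul_of_nonneg_right hfinal (Real.sqrt_nonneg _)) hσ.le
    _ = σ * Real.sqrt (2 / Real.pi) * Real.sqrt (Var[fun ω => (N ω : ℝ)]) / μ := by ring
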